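/- (Reflection of a plane wave moving down the x³-axis.) Let F₀ : ℂ → ℂ and r₀ : ℂ → ℝ, let ξ ∈ ℂ with ξ ≠ 0, and set ξ₀ = (−1 + √(1 + ξξ̄))/ξ̄ and F₂(ξ) = (1/4)((1 + √(1 + ξξ̄))²·F₀(ξ₀) − ξ²·conj(F₀(ξ₀)) − 2ξ√(1 + ξξ̄)·r₀(ξ₀)). Then: (a) ξ·(1 − ξ₀ξ̄₀) = 2ξ₀, so u(ξ) = (0,−1) − 2⟨(0,−1), u(ξ₀)⟩·u(ξ₀), i.e. ξ is the mirror reflection of the downward vertical direction in the normal u(ξ₀); and (b) F₂(ξ) = (1/2)(z₀ − 2t₀ξ − z̄₀ξ²) where (z₀,t₀) = P(ξ₀, F₀(ξ₀), r₀(ξ₀)), i.e. the reflected line with direction ξ and twistor coordinate F₂(ξ) passes through the point of the surface with normal direction ξ₀. -/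

import Mathlib

open ComplexConjugate

/-- The point of `ℝ³ = ℂ × ℝ` on the oriented line with twistor data `(ξ, η)`
at signed distance `r` from the point of the line closest to the origin. -/
noncomputable def twistorPoint (ξ η : ℂ) (r : ℝ) : ℂ × ℝ :=
  ((2 * (η - conj η * ξ ^ 2) + 2 * ξ * (1 + ξ * conj ξ) * (r : ℂ)) / (1 + ξ * conj ξ) ^ 2,
   (((-2 * (η * conj ξ + conj η * ξ) + (1 - ξ ^ 2 * (conj ξ) ^ 2) * (r : ℂ)) /
      (1 + ξ * conj ξ) ^ 2).re))

/-- The unit vector in `ℝ³ = ℂ × ℝ` obtained from `ξ ∈ ℂ` by inverse stereographic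
projection from the south pole of the unit sphere. -/
noncomputable def stereoDir (ξ : ℂ) : ℂ × ℝ :=
  (2 * ξ / (1 + ξ * conj ξ), (1 - Complex.normSq ξ) / (1 + Complex.normSq ξ))

/-- The Euclidean inner product on `ℝ³ = ℂ × ℝ`. -/
noncomputable def euclInner (p q : ℂ × ℝ) : ℝ :=
  (p.1 * conj q.1).re + p.2 * q.2

set_option maxHeartbeats 1000000 in
theorem aux_c1 (w x η cη ρ : ℂ) (hx : x ≠ 0) (hw : w ≠ 0) (hw1 : w + 1 ≠ 0) :
    (2 * (η - cη * (x / (w + 1)) ^ 2) +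
        2 * (x / (w + 1)) * (1 + x / (w + 1) * ((w - 1) / x)) * ρ) * ((w + 1) / (2 * w)) ^ 2 =
      (2 * η * (w + 1) ^ 2 - 2 * cη * x ^ 2 + 4 * x * w * ρ) / (4 * w ^ 2) := by
  field_simp
  ring

set_option maxHeartbeats 1000000 in
theorem aux_c2 (w x η cη ρ : ℂ) (hx : x ≠ 0) (hw : w ≠ 0) (hw1 : w + 1 ≠ 0) :
    (-2 * (η * ((w - 1) / x) + cη * (x / (w + 1))) +
        (1 - (x / (w + 1)) ^ 2 * ((w - 1) / x) ^ 2) * ρ) * ((w + 1) / (2 * w)) ^ 2 =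
      (-2 * η * (w - 1) * (w + 1) ^ 2 - 2 * cη * x ^ 2 * (w + 1) + 4 * w * ρ * x) /
        (4 * w ^ 2 * x) := by
  field_simp
  ring

set_option maxHeartbeats 1000000 in
theorem aux_c3 (w x η cη ρ : ℂ) (hx : x ≠ 0) (hw : w ≠ 0) (hw1 : w + 1 ≠ 0) :
    (2 * (cη - η * ((w - 1) / x) ^ 2) +
        2 * ((w - 1) / x) * (1 + (w - 1) / x * (x / (w + 1))) * ρ) * ((w + 1) / (2 * w)) ^ 2 =
      (2 * cη * (w + 1) ^ 2 * x ^ 2 - 2 * η * (w - 1) ^ 2 * (w + 1) ^ 2 +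
        4 * w * (w - 1) * (w + 1) * ρ * x) / (4 * w ^ 2 * x ^ 2) := by
  field_simp
  first
  | ring
  | (rw [div_eq_iff (by simp [mul_eq_zero, pow_eq_zero_iff, hx, hw, hw1])]; ring)

set_option maxHeartbeats 1000000 in
theorem aux_reflect (w x η cη ρ : ℂ) (hx : x ≠ 0) (hw : w ≠ 0) (hw1 : w + 1 ≠ 0) :
    1 * 4⁻¹ * ((1 + w) ^ 2 * η - x ^ 2 * cη - 2 * x * w * ρ) =
    1 * 2⁻¹ *
      ((2 * (η - cη * (x / (w + 1)) ^ 2) +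
              2 * (x / (w + 1)) * (1 + x / (w + 1) * ((w - 1) / x)) * ρ) *
            ((w + 1) / (2 * w)) ^ 2 -
          2 *
              ((-2 * (η * ((w - 1) / x) + cη * (x / (w + 1))) +
                  (1 - (x / (w + 1)) ^ 2 * ((w - 1) / x) ^ 2) * ρ) *
                ((w + 1) / (2 * w)) ^ 2) *
            x -
        (2 * (cη - η * ((w - 1) / x) ^ 2) +
              2 * ((w - 1) / x) * (1 + (w - 1) / x * (x / (w + 1))) * ρ) *
            ((w + 1) / (2 * w)) ^ 2 *
          x ^ 2) := by
  have hD : (4 * w ^ 2 * x ^ 2 : ℂ) ≠ 0 :=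
    mul_ne_zero (mul_ne_zero (by norm_num) (pow_ne_zero 2 hw)) (pow_ne_zero 2 hx)
  have h4 : (4 * w ^ 2 : ℂ) ≠ 0 := mul_ne_zero (by norm_num) (pow_ne_zero 2 hw)
  have h4x : (4 * w ^ 2 * x : ℂ) ≠ 0 := mul_ne_zero h4 hx
  have m1 : (2 * η * (w + 1) ^ 2 - 2 * cη * x ^ 2 + 4 * x * w * ρ) / (4 * w ^ 2) =
      ((2 * η * (w + 1) ^ 2 - 2 * cη * x ^ 2 + 4 * x * w * ρ) * x ^ 2) / (4 * w ^ 2 * x ^ 2) := by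
    rw [div_eq_div_iff h4 hD]; ring
  have m2 : (-2 * η * (w - 1) * (w + 1) ^ 2 - 2 * cη * x ^ 2 * (w + 1) + 4 * w * ρ * x) /
        (4 * w ^ 2 * x) =
      ((-2 * η * (w - 1) * (w + 1) ^ 2 - 2 * cη * x ^ 2 * (w + 1) + 4 * w * ρ * x) * x) /
        (4 * w ^ 2 * x ^ 2) := by
    rw [div_eq_div_iff h4x hD]; ring
  rw [aux_c1 w x η cη ρ hx hw hw1, aux_c2 w x η cη ρ hx hw hw1, aux_c3 w x η cη ρ hx hw hw1,
    m1, m2]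
  rw [mul_div_assoc', div_mul_eq_mul_div, div_mul_eq_mul_div, div_sub_div_same,
    div_sub_div_same, mul_div_assoc', eq_div_iff hD]
  ring

/-- Reflection of a plane wave moving down the x³-axis: with
`ξ₀ = (−1 + √(1 + ξξ̄))/ξ̄` and
`F₂(ξ) = ¼((1 + √(1 + ξξ̄))²F₀(ξ₀) − ξ²·conj(F₀(ξ₀)) − 2ξ√(1 + ξξ̄)·r₀(ξ₀))`:
(a) `ξ` is the mirror reflection of the downward vertical direction `(0, −1)` in the
normal `stereoDir ξ₀`, and (b) the reflected line with direction `ξ` and twistor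
coordinate `F₂(ξ)` passes through the surface point `twistorPoint ξ₀ (F₀ ξ₀) (r₀ ξ₀)`. -/
theorem plane_wave_down_x3_reflection (F₀ : ℂ → ℂ) (r₀ : ℂ → ℝ) (ξ : ℂ) (hξ : ξ ≠ 0)
    (ξ₀ : ℂ)
    (hξ₀ : ξ₀ = (-1 + (Real.sqrt (1 + Complex.normSq ξ) : ℂ)) / conj ξ)
    (F₂ξ : ℂ)
    (hF₂ : F₂ξ = (1 / 4) * ((1 + (Real.sqrt (1 + Complex.normSq ξ) : ℂ)) ^ 2 * F₀ ξ₀ -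
      ξ ^ 2 * conj (F₀ ξ₀) -
      2 * ξ * (Real.sqrt (1 + Complex.normSq ξ) : ℂ) * (r₀ ξ₀ : ℂ))) :
    (ξ * (1 - ξ₀ * conj ξ₀) = 2 * ξ₀ ∧
      stereoDir ξ = ((0 : ℂ), (-1 : ℝ)) -
        (2 * euclInner ((0 : ℂ), (-1 : ℝ)) (stereoDir ξ₀)) • stereoDir ξ₀) ∧
    F₂ξ = (1 / 2) * ((twistorPoint ξ₀ (F₀ ξ₀) (r₀ ξ₀)).1 -
      2 * ((twistorPoint ξ₀ (F₀ ξ₀) (r₀ ξ₀)).2 : ℂ) * ξ -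
      conj ((twistorPoint ξ₀ (F₀ ξ₀) (r₀ ξ₀)).1) * ξ ^ 2) := by
  set s := Real.sqrt (1 + Complex.normSq ξ) with hs
  have hnp : 0 < Complex.normSq ξ := Complex.normSq_pos.mpr hξ
  have hsq : s ^ 2 = 1 + Complex.normSq ξ := Real.sq_sqrt (by positivity)
  have hs1 : 1 < s := by nlinarith [Real.sqrt_nonneg (1 + Complex.normSq ξ)]
  have hc : conj ξ ≠ 0 := by simpa using hξ
  have hw2 : (s : ℂ) ^ 2 = 1 + ξ * conj ξ := by
    rw [Complex.mul_conj]; exact_mod_cast hsq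
  have hw0 : (s : ℂ) ≠ 0 := Complex.ofReal_ne_zero.mpr (by linarith)
  have hw1 : (s : ℂ) + 1 ≠ 0 := by
    exact_mod_cast (show ((s + 1 : ℝ) : ℂ) ≠ 0 from Complex.ofReal_ne_zero.mpr (by linarith))
  have hξ0' : ξ₀ = ξ / ((s : ℂ) + 1) := by
    rw [hξ₀, div_eq_div_iff hc hw1]
    linear_combination hw2
  have hcξ0 : conj ξ₀ = ((s : ℂ) - 1) / ξ := by
    rw [hξ₀, map_div₀]
    simp only [map_add, map_neg, map_one, Complex.conj_conj, Complex.conj_ofReal]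
    ring
  have hprod : ξ₀ * conj ξ₀ = ((s : ℂ) - 1) / ((s : ℂ) + 1) := by
    rw [hcξ0, hξ0']; field_simp
  have hnsq0 : Complex.normSq ξ₀ = (s - 1) / (s + 1) := by
    have h2 : (Complex.normSq ξ₀ : ℂ) = (((s - 1) / (s + 1) : ℝ) : ℂ) := by
      rw [← Complex.mul_conj, hprod]; push_cast; ring
    exact_mod_cast h2
  have hs0r : s ≠ 0 := by linarith
  have hs1r : s + 1 ≠ 0 := by linarith
  have hnn : Complex.normSq ξ = s ^ 2 - 1 := by linarith
  clear_value s
  refine ⟨⟨?_, ?_⟩, ?_⟩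
  · rw [hcξ0, hξ0']
    field_simp
    ring
  · have e1 : euclInner ((0 : ℂ), (-1 : ℝ)) (stereoDir ξ₀) = -(1 / s) := by
      simp only [euclInner, stereoDir, hnsq0, zero_mul, Complex.zero_re]
      field_simp
      ring_nf
      simp [hs0r]
    have e2 : stereoDir ξ₀ = (ξ / (s : ℂ), 1 / s) := by
      unfold stereoDir
      rw [hnsq0, hprod, hξ0']
      refine Prod.ext ?_ ?_
      · show 2 * (ξ / ((s:ℂ) + 1)) / (1 + ((s:ℂ) - 1) / ((s:ℂ) + 1)) = ξ / (s:ℂ)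
        field_simp
        rw [div_eq_iff (show (s:ℂ) + 1 + ((s:ℂ) - 1) ≠ 0 by
          intro h; exact hw0 (by linear_combination h / 2))]
        ring
      · show (1 - (s - 1) / (s + 1)) / (1 + (s - 1) / (s + 1)) = 1 / s
        field_simp
        ring_nf
        simp [hs0r]
    rw [e1, e2]
    unfold stereoDir
    rw [hnn, Complex.mul_conj, hnn]
    refine Prod.ext ?_ ?_
    · show 2 * ξ / (1 + ((s ^ 2 - 1 : ℝ) : ℂ)) =
        0 - (2 * -(1 / s)) • (ξ / (s : ℂ))
      rw [Complex.real_smul]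
      push_cast
      field_simp
      ring
    · show (1 - (s ^ 2 - 1)) / (1 + (s ^ 2 - 1)) = -1 - (2 * -(1 / s)) * (1 / s)
      field_simp
      ring
  · have hA : (1 : ℂ) + ξ₀ * conj ξ₀ = 2 * (s : ℂ) / ((s : ℂ) + 1) := by
      rw [hprod]; field_simp; ring
    have hreal : conj ((-2 * (F₀ ξ₀ * conj ξ₀ + conj (F₀ ξ₀) * ξ₀) +
        (1 - ξ₀ ^ 2 * (conj ξ₀) ^ 2) * ((r₀ ξ₀ : ℝ) : ℂ)) / (1 + ξ₀ * conj ξ₀) ^ 2) =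
        ((-2 * (F₀ ξ₀ * conj ξ₀ + conj (F₀ ξ₀) * ξ₀) +
        (1 - ξ₀ ^ 2 * (conj ξ₀) ^ 2) * ((r₀ ξ₀ : ℝ) : ℂ)) / (1 + ξ₀ * conj ξ₀) ^ 2) := by
      simp only [map_div₀, map_add, map_mul, map_sub, map_pow, map_neg, map_one, map_ofNat,
        Complex.conj_conj, Complex.conj_ofReal]
      ring
    have hT : (((twistorPoint ξ₀ (F₀ ξ₀) (r₀ ξ₀)).2 : ℝ) : ℂ) =
        (-2 * (F₀ ξ₀ * conj ξ₀ + conj (F₀ ξ₀) * ξ₀) +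
        (1 - ξ₀ ^ 2 * (conj ξ₀) ^ 2) * ((r₀ ξ₀ : ℝ) : ℂ)) / (1 + ξ₀ * conj ξ₀) ^ 2 := by
      have h2 : (twistorPoint ξ₀ (F₀ ξ₀) (r₀ ξ₀)).2 =
          ((-2 * (F₀ ξ₀ * conj ξ₀ + conj (F₀ ξ₀) * ξ₀) +
          (1 - ξ₀ ^ 2 * (conj ξ₀) ^ 2) * ((r₀ ξ₀ : ℝ) : ℂ)) / (1 + ξ₀ * conj ξ₀) ^ 2).re := rfl
      rw [h2]
      exact Complex.conj_eq_iff_re.mp hreal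
    have hZ : (twistorPoint ξ₀ (F₀ ξ₀) (r₀ ξ₀)).1 =
        (2 * (F₀ ξ₀ - conj (F₀ ξ₀) * ξ₀ ^ 2) + 2 * ξ₀ * (1 + ξ₀ * conj ξ₀) * ((r₀ ξ₀ : ℝ) : ℂ)) /
          (1 + ξ₀ * conj ξ₀) ^ 2 := rfl
    have hAinv : ((1 : ℂ) + ξ₀ * conj ξ₀)⁻¹ = ((s : ℂ) + 1) / (2 * (s : ℂ)) := by
      rw [hA, inv_div]
    rw [hF₂, hT, hZ]
    simp only [div_eq_mul_inv, ← inv_pow]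
    rw [hAinv]
    set_option maxHeartbeats 1000000 in
    simp only [map_mul, map_add, map_sub, map_pow, map_one, map_ofNat, map_div₀, map_inv₀,
      map_neg, Complex.conj_conj, Complex.conj_ofReal]
    rw [hcξ0, hξ0']
    exact aux_reflect (s : ℂ) ξ (F₀ (ξ / ((s : ℂ) + 1)))
      (conj (F₀ (ξ / ((s : ℂ) + 1)))) ((r₀ (ξ / ((s : ℂ) + 1)) : ℝ) : ℂ) hξ hw0 hw1
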